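/- Let K be a field of characteristic 3 and p(t) = t⁴ + at² + bt + c a polynomial over K with at most two distinct roots in an algebraic closure of K. Then there exists u in K with either p(t) = t⁴ + u·t or p(t) = t⁴ - 2u·t² + u². If moreover p has at most one nonzero root in the algebraic closure, then p(t) = t⁴ + v·t for some v in K. -/
import Mathlib
open Polynomial

private lemma aux_coeffs {R : Type*} [CommRing R] {a2 a1 a0 b3 b2 b1 b0 : R}
    (h : X^4 + C a2 * X^2 + C a1 * X + C a0 =
      X^4 + C b3 * X^3 + C b2 * X^2 + C b1 * X + C b0) :
    b3 = 0 ∧ a2 = b2 ∧ a1 = b1 ∧ a0 = b0 := by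
  refine ⟨?_, ?_, ?_, ?_⟩
  · have := congrArg (fun q => Polynomial.coeff q 3) h; simpa using this.symm
  · have := congrArg (fun q => Polynomial.coeff q 2) h; simpa using this
  · have := congrArg (fun q => Polynomial.coeff q 1) h; simpa using this
  · have := congrArg (fun q => Polynomial.coeff q 0) h; simpa using this

private lemma exp4' {R : Type*} [CommRing R] [CharP R 3] (r : R) : (X - C r)^4 =
    X^4 + C (-r) * X^3 + C 0 * X^2 + C (-(r^3)) * X + C (r^4) := by
  have h3 : (3 : R[X]) = 0 := by exact_mod_cast CharP.cast_eq_zero R[X] 3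
  simp only [map_neg, map_pow, map_zero]
  linear_combination (- C r * X^3 + 2*(C r)^2*X^2 - (C r)^3*X) * h3

private lemma exp31' {R : Type*} [CommRing R] [CharP R 3] (r s : R) : (X - C r)^3 * (X - C s) =
    X^4 + C (-s) * X^3 + C 0 * X^2 + C (-(r^3)) * X + C (r^3 * s) := by
  have h3 : (3 : R[X]) = 0 := by exact_mod_cast CharP.cast_eq_zero R[X] 3
  simp only [map_neg, map_pow, map_zero, map_mul]
  linear_combination ((C r)^2*X^2 - C r*X^3 + C r*C s*X^2 - (C r)^2*C s*X) * h3

private lemma exp22' {R : Type*} [CommRing R] [CharP R 3] (r s : R) : (X - C r)^2 * (X - C s)^2 =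
    X^4 + C (r+s) * X^3 + C ((r+s)^2 - r*s) * X^2 + C (r*s*(r+s)) * X + C ((r*s)^2) := by
  have h3 : (3 : R[X]) = 0 := by exact_mod_cast CharP.cast_eq_zero R[X] 3
  simp only [map_add, map_pow, map_sub, map_mul]
  linear_combination (-(C r + C s)*X^3 + C r*C s*X^2 - (C r + C s)*C r*C s*X) * h3

theorem stmt14 {K : Type*} [Field K] [CharP K 3] (a b c : K)
    (p : Polynomial K) (hp : p = X ^ 4 + C a * X ^ 2 + C b * X + C c)
    (hroots : {x : AlgebraicClosure K |
        (p.map (algebraMap K (AlgebraicClosure K))).IsRoot x}.ncard ≤ 2) :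
    (∃ u : K, p = X ^ 4 + C u * X ∨ p = X ^ 4 - C (2 * u) * X ^ 2 + C (u ^ 2)) ∧
      (({x : AlgebraicClosure K |
          (p.map (algebraMap K (AlgebraicClosure K))).IsRoot x} \ {0}).ncard ≤ 1 →
        ∃ v : K, p = X ^ 4 + C v * X) := by
  classical
  set L := AlgebraicClosure K with hL
  haveI : CharP L 3 := charP_of_injective_algebraMap (algebraMap K L).injective 3
  set φ := algebraMap K L with hφ
  set q := p.map φ with hqdef
  have hinj : ∀ {x : K}, φ x = 0 → x = 0 :=
    fun {x} h => (algebraMap K L).injective (by simpa using h)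
  have hq : q = X^4 + C (φ a) * X^2 + C (φ b) * X + C (φ c) := by
    simp [hqdef, hp, Polynomial.map_add, Polynomial.map_mul, Polynomial.map_pow]
  have hm : q.Monic := by rw [hq]; monicity!
  have hdeg : q.natDegree = 4 := by rw [hq]; compute_degree!
  have hq0 : q ≠ 0 := hm.ne_zero
  have hcard : Multiset.card q.roots = 4 := by
    rw [← hdeg]; exact splits_iff_card_roots.mp (IsAlgClosed.splits q)
  have hsets : {x : L | q.IsRoot x} = (↑q.roots.toFinset : Set L) := by
    ext x; simp [Polynomial.mem_roots hq0]
  have hcard2 : q.roots.toFinset.card ≤ 2 := by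
    rw [hsets, Set.ncard_coe_finset] at hroots; exact hroots
  have hcard1 : 1 ≤ q.roots.toFinset.card := by
    rw [Finset.one_le_card]
    obtain ⟨x, hx⟩ := Multiset.card_pos_iff_exists_mem.mp (by rw [hcard]; norm_num)
    exact ⟨x, Multiset.mem_toFinset.mpr hx⟩
  have hprod := prod_multiset_X_sub_C_of_monic_of_roots_card_eq hm (hcard.trans hdeg.symm)
  have master : (a = 0 ∧ c = 0) ∨
      (b = 0 ∧ c = a ^ 2 ∧ 2 ≤ ({x : L | q.IsRoot x} \ {0}).ncard) := by
    rcases (by omega : q.roots.toFinset.card = 1 ∨ q.roots.toFinset.card = 2) with h1 | h2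
    · -- single root
      obtain ⟨r, hr⟩ := Finset.card_eq_one.mp h1
      have hR : q.roots = Multiset.replicate 4 r :=
        Multiset.eq_replicate.mpr ⟨hcard, fun x hx => by
          have : x ∈ q.roots.toFinset := Multiset.mem_toFinset.mpr hx
          rw [hr] at this; simpa using this⟩
      have hfac : q = (X - C r)^4 := by
        rw [← hprod, hR]
        simp only [Multiset.map_replicate, Multiset.prod_replicate]
      obtain ⟨h3, h2', h1', h0'⟩ := aux_coeffs ((hq.symm.trans hfac).trans (exp4' r))
      have hr0 : r = 0 := by simpa using h3
      subst hr0
      exact Or.inl ⟨hinj (by simpa using h2'), hinj (by simpa using h0')⟩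
    · -- two distinct roots
      obtain ⟨r, s, hrs, hset⟩ := Finset.card_eq_two.mp h2
      have hrmem : r ∈ q.roots := Multiset.mem_toFinset.mp (by rw [hset]; simp)
      have hsmem : s ∈ q.roots := Multiset.mem_toFinset.mp (by rw [hset]; simp)
      obtain ⟨m, hmdef⟩ : ∃ m, m = Multiset.count r q.roots := ⟨_, rfl⟩
      obtain ⟨n, hndef⟩ : ∃ n, n = Multiset.count s q.roots := ⟨_, rfl⟩
      have hm1 : 1 ≤ m := hmdef ▸ Multiset.count_pos.mpr hrmem
      have hn1 : 1 ≤ n := hndef ▸ Multiset.count_pos.mpr hsmem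
      have hsum : m + n = 4 := by
        have h := Multiset.toFinset_sum_count_eq q.roots
        rw [hset, Finset.sum_pair hrs, hcard, ← hmdef, ← hndef] at h
        exact h
      have hR : q.roots = m • {r} + n • {s} := by
        have h := Multiset.toFinset_sum_count_nsmul_eq q.roots
        rw [hset, Finset.sum_pair hrs, ← hmdef, ← hndef] at h
        exact h.symm
      have hfac : q = (X - C r)^m * (X - C s)^n := by
        rw [← hprod, hR]
        simp only [Multiset.map_add, Multiset.nsmul_singleton, Multiset.map_replicate,
          Multiset.prod_add, Multiset.prod_replicate]
      rcases (by omega : m = 3 ∧ n = 1 ∨ m = 1 ∧ n = 3 ∨ m = 2 ∧ n = 2) with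
        ⟨hm3, hn1'⟩ | ⟨hm1', hn3⟩ | ⟨hm2, hn2⟩
      · rw [hm3, hn1', pow_one] at hfac
        obtain ⟨h3, h2', h1', h0'⟩ := aux_coeffs ((hq.symm.trans hfac).trans (exp31' r s))
        have hs0 : s = 0 := by simpa using h3
        refine Or.inl ⟨hinj (by simpa using h2'), hinj ?_⟩
        rw [h0', hs0, mul_zero]
      · rw [hm1', hn3, pow_one, mul_comm] at hfac
        obtain ⟨h3, h2', h1', h0'⟩ := aux_coeffs ((hq.symm.trans hfac).trans (exp31' s r))
        have hr0 : r = 0 := by simpa using h3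
        refine Or.inl ⟨hinj (by simpa using h2'), hinj ?_⟩
        rw [h0', hr0, mul_zero]
      · rw [hm2, hn2] at hfac
        obtain ⟨h3, h2', h1', h0'⟩ := aux_coeffs ((hq.symm.trans hfac).trans (exp22' r s))
        have hs : s = -r := by linear_combination h3
        have hr0 : r ≠ 0 := by
          intro h; exact hrs (by rw [h, hs, h, neg_zero])
        have hs0 : s ≠ 0 := by rw [hs]; simpa using hr0
        have hb : b = 0 := hinj (by rw [h1', h3, mul_zero])
        have hc : c = a ^ 2 := by
          refine ((algebraMap K L).injective ?_).symm
          show φ (a ^ 2) = φ c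
          rw [map_pow, h2', h0', h3]; ring
        have hset2 : {x : L | q.IsRoot x} = ({r, s} : Set L) := by
          rw [hsets, hset]; simp
        have h0notin : (0 : L) ∉ ({r, s} : Set L) := by
          intro h
          simp only [Set.mem_insert_iff, Set.mem_singleton_iff] at h
          rcases h with h | h
          exacts [hr0 h.symm, hs0 h.symm]
        have hnc : ({x : L | q.IsRoot x} \ {0}).ncard = 2 := by
          rw [hset2, Set.diff_singleton_eq_self h0notin, Set.ncard_pair hrs]
        exact Or.inr ⟨hb, hc, le_of_eq hnc.symm⟩
  constructor
  · rcases master with ⟨ha, hc⟩ | ⟨hb, hc, _⟩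
    · exact ⟨b, Or.inl (by rw [hp, ha, hc]; simp)⟩
    · refine ⟨a, Or.inr ?_⟩
      have hK3 : (3 : K) = 0 := CharP.cast_eq_zero K 3
      have ha' : C a = -C (2*a) := by
        rw [← map_neg]
        exact congrArg C (by linear_combination a * hK3)
      rw [hp, hb, hc, ha', map_zero]; ring
  · intro hle
    rcases master with ⟨ha, hc⟩ | ⟨_, _, h2⟩
    · exact ⟨b, by rw [hp, ha, hc]; simp⟩
    · exact absurd hle (not_le.mpr (lt_of_lt_of_le one_lt_two h2))
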